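/- Let G be a graph on rn vertices with minimum degree at least (r-1)n + 1, let A ⊆ V(G) with |A| = n and e(G[A]) ≤ γn², and let 0 < β < 1/2. Then the number of vertices v ∈ V(G)\A with at most βn neighbors in A is at most 2γn/(1-2β) . -/

import Mathlib

open scoped Classical

/-- In the setting of a graph on `rn` vertices with min degree `(r-1)n+1` and a
`γ`-independent `n`-set `A`, the number of vertices outside `A` with at most `βn`
neighbors in `A` is at most `2γn/(1-2β)`. -/
theorem stmt5 {V : Type*} [Fintype V] [DecidableEq V] (r n : ℕ) (hr : 2 ≤ r) (hn : 1 ≤ n)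
    (G : SimpleGraph V) [DecidableRel G.Adj]
    (hcard : Fintype.card V = r * n)
    (hδ : ∀ v, (r - 1) * n + 1 ≤ G.degree v)
    (A : Finset V) (hA : A.card = n) (γ β : ℝ) (hγ : 0 < γ) (hβ : 0 < β) (hβ' : β < 1/2)
    (he : ((G.edgeFinset ∩ A.sym2).card : ℝ) ≤ γ * n ^ 2) :
    ((Finset.univ.filter (fun v =>
        v ∉ A ∧ ((A.filter (fun a => G.Adj v a)).card : ℝ) ≤ β * n)).card : ℝ)
      ≤ 2 * γ * n / (1 - 2 * β) := by
  classical
  have hrn : (r - 1) * n + n = r * n := by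
    cases r with
    | zero => omega
    | succ r => simp [Nat.succ_mul]
  -- induced graph on A
  let G' : SimpleGraph V :=
    { Adj := fun x y => G.Adj x y ∧ x ∈ A ∧ y ∈ A
      symm := ⟨fun x y ⟨h, hx, hy⟩ => ⟨h.symm, hy, hx⟩⟩
      loopless := ⟨fun x ⟨h, _⟩ => G.loopless.irrefl x h⟩ }
  have hG'adj : ∀ x y, G'.Adj x y ↔ G.Adj x y ∧ x ∈ A ∧ y ∈ A := fun _ _ => Iff.rfl
  haveI : DecidableRel G'.Adj := fun x y => instDecidableAnd
  have hedge : G'.edgeFinset = G.edgeFinset ∩ A.sym2 := by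
    ext s
    induction s using Sym2.ind with
    | _ x y =>
      simp [SimpleGraph.mem_edgeFinset, Finset.mk_mem_sym2_iff, hG'adj, and_assoc]
  have hhand : ∑ a ∈ A, (A.filter (fun b => G.Adj a b)).card
      = 2 * (G.edgeFinset ∩ A.sym2).card := by
    rw [← hedge, ← SimpleGraph.sum_degrees_eq_twice_card_edges]
    rw [← Finset.sum_subset (Finset.subset_univ A)]
    · apply Finset.sum_congr rfl
      intro a ha
      rw [SimpleGraph.degree, SimpleGraph.neighborFinset_eq_filter]
      congr 1
      ext b
      simp only [Finset.mem_filter, Finset.mem_univ, true_and, hG'adj]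
      tauto
    · intro v _ hv
      rw [SimpleGraph.degree, SimpleGraph.neighborFinset_eq_filter]
      simp only [Finset.card_eq_zero, Finset.filter_eq_empty_iff]
      intro b _
      simp [hG'adj, hv]
  -- swap double counting
  have hswap : ∑ a ∈ A, (Aᶜ.filter (fun v => ¬ G.Adj a v)).card
      = ∑ v ∈ Aᶜ, (A.filter (fun a => ¬ G.Adj a v)).card := by
    simp_rw [Finset.card_filter]
    exact Finset.sum_comm
  have hcompl : Aᶜ.card = (r - 1) * n := by
    rw [Finset.card_compl, hcard, hA]; omega
  have key3 : ∀ a ∈ A, (Aᶜ.filter (fun v => ¬ G.Adj a v)).card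
      ≤ (A.filter (fun b => G.Adj a b)).card := by
    intro a ha
    have h1 := Finset.card_filter_add_card_filter_not (s := Aᶜ)
      (p := fun v => G.Adj a v)
    have h2 : (A.filter (fun v => G.Adj a v)).card + (Aᶜ.filter (fun v => G.Adj a v)).card
        = G.degree a := by
      rw [SimpleGraph.degree, SimpleGraph.neighborFinset_eq_filter,
        ← Finset.union_compl A, Finset.filter_union,
        Finset.card_union_of_disjoint]
      exact (Finset.disjoint_filter_filter disjoint_compl_right)
    have h3 := hδ a
    omega
  -- sum bound
  have hNat : ∑ v ∈ Aᶜ, (A.filter (fun a => ¬ G.Adj a v)).card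
      ≤ 2 * (G.edgeFinset ∩ A.sym2).card := by
    rw [← hswap, ← hhand]
    exact Finset.sum_le_sum key3
  have hsum2 : ∑ v ∈ Aᶜ, ((A.filter (fun a => ¬ G.Adj a v)).card : ℝ)
      ≤ 2 * γ * n ^ 2 := by
    have h2 : ((∑ v ∈ Aᶜ, (A.filter (fun a => ¬ G.Adj a v)).card : ℕ) : ℝ)
        ≤ 2 * ((G.edgeFinset ∩ A.sym2).card : ℝ) := by exact_mod_cast hNat
    push_cast at h2
    linarith
  set B := Finset.univ.filter (fun v =>
      v ∉ A ∧ ((A.filter (fun a => G.Adj v a)).card : ℝ) ≤ β * n) with hBdef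
  have hBsub : B ⊆ Aᶜ := by
    intro v hv
    rw [hBdef, Finset.mem_filter] at hv
    simpa using hv.2.1
  have key4 : ∀ v ∈ B, (1 - 2 * β) * n ≤ ((A.filter (fun a => ¬ G.Adj a v)).card : ℝ) := by
    intro v hv
    rw [hBdef, Finset.mem_filter] at hv
    obtain ⟨-, -, hd⟩ := hv
    have hsame : A.filter (fun a => G.Adj v a) = A.filter (fun a => G.Adj a v) := by
      apply Finset.filter_congr
      intro a _
      exact ⟨fun h => h.symm, fun h => h.symm⟩
    have hsplit := Finset.card_filter_add_card_filter_not (s := A)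
      (p := fun a => G.Adj a v)
    rw [hA] at hsplit
    rw [hsame] at hd
    have hd' : ((A.filter (fun a => ¬ G.Adj a v)).card : ℝ)
        = n - (A.filter (fun a => G.Adj a v)).card := by
      have : ((A.filter (fun a => G.Adj a v)).card : ℝ)
          + ((A.filter (fun a => ¬ G.Adj a v)).card : ℝ) = n := by exact_mod_cast hsplit
      linarith
    have hn0 : (0:ℝ) ≤ n := Nat.cast_nonneg n
    rw [hd']
    nlinarith
  have hBbound : (B.card : ℝ) * ((1 - 2 * β) * n) ≤ 2 * γ * n ^ 2 := by
    calc (B.card : ℝ) * ((1 - 2 * β) * n)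
        ≤ ∑ v ∈ B, ((A.filter (fun a => ¬ G.Adj a v)).card : ℝ) := by
          have h := Finset.card_nsmul_le_sum B _ _ key4
          simpa [nsmul_eq_mul] using h
      _ ≤ ∑ v ∈ Aᶜ, ((A.filter (fun a => ¬ G.Adj a v)).card : ℝ) := by
          apply Finset.sum_le_sum_of_subset_of_nonneg hBsub
          intro v _ _
          positivity
      _ ≤ 2 * γ * n ^ 2 := hsum2
  have hβ2 : (0:ℝ) < 1 - 2 * β := by linarith
  have hn0 : (0:ℝ) < n := by exact_mod_cast hn
  rw [le_div_iff₀ hβ2]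
  nlinarith [hBbound]
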